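/- Let n ≥ 2 and suppose p_1,...,p_n ∈ ℝ^d are in good position. Let Q_{n-1} and Q_n denote the circumcenters of p_1,...,p_{n-1} and of p_1,...,p_n respectively. Then the line through p_n and Q_{n-1} is perpendicular to the affine span H(p_1,...,p_{n-1}), and Q_n lies on the half-line (ray) from p_n through Q_{n-1}. -/

import Mathlib

/-- `GoodPosition p a n`: the `n` points `p a, p (a+1), ..., p (a+n-1)` of `ℝ^d` are in
good position: they are affinely independent (in general position), and each point is
equidistant from all earlier ones (`|p_1 - p_i| = ⋯ = |p_{i-1} - p_i|`). -/
def GoodPosition {d : ℕ} (p : ℕ → EuclideanSpace ℝ (Fin d)) (a n : ℕ) : Prop :=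
  AffineIndependent ℝ (fun i : Fin n => p (a + i)) ∧
  ∀ i j k : ℕ, i < n → j < i → k < i →
    dist (p (a + j)) (p (a + i)) = dist (p (a + k)) (p (a + i))

/-- `IsCircumcenter Q p a n`: `Q` is the circumcenter of the points
`p a, ..., p (a+n-1)`, i.e. `Q` belongs to their affine span and is equidistant
from all of them (it is the center of the unique `(n-2)`-sphere through them
in their affine span). -/
def IsCircumcenter {d : ℕ} (Q : EuclideanSpace ℝ (Fin d))
    (p : ℕ → EuclideanSpace ℝ (Fin d)) (a n : ℕ) : Prop :=
  Q ∈ affineSpan ℝ (p '' Set.Ico a (a + n)) ∧ ∃ R : ℝ, ∀ i < n, dist Q (p (a + i)) = R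

set_option maxHeartbeats 1600000 in
/-- Let `n ≥ 2` and let `p_1, ..., p_n ∈ ℝ^d` be in good position. Let `Q_{n-1}` and
`Q_n` be the circumcenters of `p_1, ..., p_{n-1}` and of `p_1, ..., p_n` respectively.
Then the line through `p_n` and `Q_{n-1}` is perpendicular to the affine span
`H(p_1, ..., p_{n-1})` (i.e. `Q_{n-1} - p_n` is orthogonal to all differences
`p_i - p_j`, `i, j ≤ n-1`), and `Q_n` lies on the ray from `p_n` through `Q_{n-1}`. -/
theorem circumcenter_on_ray (d n : ℕ) (hn : 2 ≤ n)
    (p : ℕ → EuclideanSpace ℝ (Fin d))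
    (hgood : GoodPosition p 1 n)
    (Q1 Qn : EuclideanSpace ℝ (Fin d))
    (hQ1 : IsCircumcenter Q1 p 1 (n - 1))
    (hQn : IsCircumcenter Qn p 1 n) :
    (∀ i j, 1 ≤ i → i ≤ n - 1 → 1 ≤ j → j ≤ n - 1 →
      (inner ℝ (Q1 - p n) (p i - p j) : ℝ) = 0) ∧
    (∃ t : ℝ, 0 ≤ t ∧ Qn - p n = t • (Q1 - p n)) := by
  obtain ⟨m, rfl⟩ : ∃ m, n = m + 1 := ⟨n - 1, by omega⟩
  have hm : 1 ≤ m := by omega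
  obtain ⟨hindep, hdist⟩ := hgood
  obtain ⟨hQ1span, R1, hQ1R⟩ := hQ1
  obtain ⟨hQnspan, Rn, hQnR⟩ := hQn
  have hm1 : m + 1 - 1 = m := by omega
  rw [hm1] at hQ1span hQ1R ⊢
  -- `p (m+1)` is equidistant from `p 1, ..., p m`
  have hcn : ∀ i, 1 ≤ i → i ≤ m → dist (p i) (p (m + 1)) = dist (p 1) (p (m + 1)) := by
    intro i h1 h2
    have := hdist m (i - 1) 0 (by omega) (by omega) (by omega)
    have e1 : 1 + (i - 1) = i := by omega
    have e2 : 1 + m = m + 1 := by omega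
    rwa [e1, e2] at this
  -- `Q1` is equidistant from `p 1, ..., p m`
  have hQ1d : ∀ i, 1 ≤ i → i ≤ m → dist Q1 (p i) = R1 := by
    intro i h1 h2
    have := hQ1R (i - 1) (by omega)
    rwa [show 1 + (i - 1) = i by omega] at this
  -- perpendicularity
  have perp : ∀ i j, 1 ≤ i → i ≤ m → 1 ≤ j → j ≤ m →
      (inner ℝ (Q1 - p (m + 1)) (p i - p j) : ℝ) = 0 := by
    intro i j hi hi' hj hj'
    have h1 : dist (p j) (p (m + 1)) = dist (p i) (p (m + 1)) := by
      rw [hcn j hj hj', hcn i hi hi']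
    have h2 : dist (p j) Q1 = dist (p i) Q1 := by
      rw [dist_comm (p j) Q1, dist_comm (p i) Q1, hQ1d j hj hj', hQ1d i hi hi']
    have := EuclideanGeometry.inner_vsub_vsub_of_dist_eq_of_dist_eq h1 h2
    simpa using this
  refine ⟨fun i j hi hi' hj hj' => perp i j hi hi' hj hj', ?_⟩
  -- `Q1 - p (m+1)` is orthogonal to `Q1 - p i` for `i ≤ m`
  have hKperp : ∀ v ∈ vectorSpan ℝ (p '' Set.Ico 1 (1 + m)),
      (inner ℝ (Q1 - p (m + 1)) v : ℝ) = 0 := by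
    intro v hv
    rw [vectorSpan_def] at hv
    induction hv using Submodule.span_induction with
    | mem x hx =>
      obtain ⟨a, ⟨i, hi, rfl⟩, b, ⟨j, hj, rfl⟩, rfl⟩ := hx
      simp only [Set.mem_Ico] at hi hj
      have := perp i j hi.1 (by omega) hj.1 (by omega)
      simpa using this
    | zero => simp
    | add x y _ _ hx hy => rw [inner_add_right, hx, hy, add_zero]
    | smul c x _ hx => rw [inner_smul_right, hx, mul_zero]
  have hQ1perp : ∀ i, 1 ≤ i → i ≤ m → (inner ℝ (Q1 - p (m + 1)) (Q1 - p i) : ℝ) = 0 := by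
    intro i h1 h2
    apply hKperp
    rw [← direction_affineSpan]
    have hpi : p i ∈ affineSpan ℝ (p '' Set.Ico 1 (1 + m)) :=
      mem_affineSpan ℝ ⟨i, Set.mem_Ico.2 ⟨h1, by omega⟩, rfl⟩
    simpa using AffineSubspace.vsub_mem_direction hQ1span hpi
  -- `p (m+1)` is not in the affine span of the first `m` points
  have hne : Q1 ≠ p (m + 1) := by
    intro h
    have hnot : p (m + 1) ∉ affineSpan ℝ (p '' Set.Ico 1 (1 + m)) := by
      have h2 := hindep.notMem_affineSpan_diff (Fin.last m) Set.univ
      intro hmem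
      apply h2
      have hsub : p '' Set.Ico 1 (1 + m) ⊆
          (fun i : Fin (m + 1) => p (1 + ↑i)) '' (Set.univ \ {Fin.last m}) := by
        rintro x ⟨a, ha, rfl⟩
        simp only [Set.mem_Ico] at ha
        refine ⟨⟨a - 1, by omega⟩, ⟨Set.mem_univ _, ?_⟩, ?_⟩
        · simp only [Set.mem_singleton_iff, Fin.ext_iff, Fin.val_last, Fin.val_mk]
          omega
        · have h : 1 + ((⟨a - 1, by omega⟩ : Fin (m + 1)) : ℕ) = a := by
            simp only [Fin.val_mk]; omega
          simp only [h]
      have := affineSpan_mono ℝ hsub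
      have hlast : p (1 + ↑(Fin.last m)) = p (m + 1) := by
        have h : 1 + ((Fin.last m : Fin (m + 1)) : ℕ) = m + 1 := by
          simp only [Fin.val_last]; omega
        rw [h]
      rw [← hlast] at hmem
      exact this hmem
    rw [h] at hQ1span
    exact hnot hQ1span
  have hL : (0:ℝ) < ‖Q1 - p (m + 1)‖ ^ 2 := by
    have h0 : Q1 - p (m + 1) ≠ 0 := sub_ne_zero.2 hne
    exact pow_pos (norm_pos_iff.2 h0) 2
  set L : ℝ := ‖Q1 - p (m + 1)‖ ^ 2 with hLdef
  set c : ℝ := dist (p 1) (p (m + 1)) with hcdef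
  set t : ℝ := c ^ 2 / (2 * L) with htdef
  have ht0 : 0 ≤ t := by positivity
  refine ⟨t, ht0, ?_⟩
  -- the candidate circumcenter
  set Q : EuclideanSpace ℝ (Fin d) := t • (Q1 - p (m + 1)) + p (m + 1) with hQdef
  -- build the simplex
  set s : Affine.Simplex ℝ (EuclideanSpace ℝ (Fin d)) m := ⟨fun i : Fin (m + 1) => p (1 + (i : ℕ)), hindep⟩
    with hsdef
  have hrange : Set.range s.points = p '' Set.Ico 1 (1 + (m + 1)) := by
    ext x
    constructor
    · rintro ⟨i, rfl⟩
      exact ⟨1 + ↑i, Set.mem_Ico.2 ⟨by omega, by omega⟩, rfl⟩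
    · rintro ⟨a, ha, rfl⟩
      simp only [Set.mem_Ico] at ha
      refine ⟨⟨a - 1, by omega⟩, ?_⟩
      show p (1 + ((⟨a - 1, _⟩ : Fin (m + 1)) : ℕ)) = p a
      have h : 1 + ((⟨a - 1, by omega⟩ : Fin (m + 1)) : ℕ) = a := by
        simp only [Fin.val_mk]; omega
      rw [h]
  -- key inner product
  have hkey : ∀ i, 1 ≤ i → i ≤ m →
      (inner ℝ (p (m + 1) - p i) (Q1 - p (m + 1)) : ℝ) = -L := by
    intro i h1 h2
    have : p (m + 1) - p i = (p (m + 1) - Q1) + (Q1 - p i) := by abel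
    rw [this, inner_add_left]
    have h3 := hQ1perp i h1 h2
    rw [real_inner_comm] at h3
    rw [h3, add_zero]
    have h4 : p (m + 1) - Q1 = -(Q1 - p (m + 1)) := by abel
    have h5 : (inner ℝ (Q1 - p (m + 1)) (Q1 - p (m + 1)) : ℝ) = L := by
      rw [hLdef, real_inner_self_eq_norm_sq]
    rw [h4, inner_neg_left, h5]
  -- distances from Q
  have hQdist : ∀ i : Fin (m + 1), dist (s.points i) Q = t * ‖Q1 - p (m + 1)‖ := by
    intro i
    have hnn : 0 ≤ t * ‖Q1 - p (m + 1)‖ := by positivity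
    have hsq : dist (s.points i) Q ^ 2 = (t * ‖Q1 - p (m + 1)‖) ^ 2 := by
      rcases eq_or_lt_of_le (Nat.lt_succ_iff.mp i.isLt) with h | h
      · -- i = m : last point
        have : s.points i = p (m + 1) := by
          show p (1 + (i : ℕ)) = p (m + 1)
          have h2 : 1 + (i : ℕ) = m + 1 := by omega
          rw [h2]
        rw [this, dist_eq_norm, hQdef]
        have : p (m + 1) - (t • (Q1 - p (m + 1)) + p (m + 1)) = -(t • (Q1 - p (m + 1))) := by
          abel
        rw [this, norm_neg, norm_smul, Real.norm_eq_abs, abs_of_nonneg ht0, mul_pow]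
      · -- i < m
        set j : ℕ := 1 + (i : ℕ) with hjdef
        have hj1 : 1 ≤ j := by omega
        have hj2 : j ≤ m := by omega
        have hpts : s.points i = p j := rfl
        rw [hpts, dist_eq_norm, hQdef]
        have hsplit : p j - (t • (Q1 - p (m + 1)) + p (m + 1)) =
            (p j - p (m + 1)) + (-t) • (Q1 - p (m + 1)) := by
          rw [neg_smul]; abel
        rw [hsplit, norm_add_sq_real, inner_smul_right, norm_smul]
        have hkey' : (inner ℝ (p j - p (m + 1)) (Q1 - p (m + 1)) : ℝ) = L := by
          have := hkey j hj1 hj2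
          have hswap : p j - p (m + 1) = -(p (m + 1) - p j) := by abel
          rw [hswap, inner_neg_left, this, neg_neg]
        rw [hkey']
        have hdj : ‖p j - p (m + 1)‖ = c := by
          rw [← dist_eq_norm, hcdef]
          exact hcn j hj1 hj2
        rw [hdj]
        have h2L : 2 * L ≠ 0 := by positivity
        have htL : t * (2 * L) = c ^ 2 := by
          rw [htdef]; field_simp
        rw [Real.norm_eq_abs, abs_neg, abs_of_nonneg ht0, mul_pow, ← hLdef]
        nlinarith [htL]
    have h1 : 0 ≤ dist (s.points i) Q := dist_nonneg
    nlinarith [hsq]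
  -- Q is in the affine span
  have hQmem : Q ∈ affineSpan ℝ (Set.range s.points) := by
    rw [hrange]
    have hQ1mem : Q1 ∈ affineSpan ℝ (p '' Set.Ico 1 (1 + (m + 1))) := by
      apply affineSpan_mono ℝ (Set.image_mono (f := p) ?_) hQ1span
      intro x hx
      simp only [Set.mem_Ico] at hx ⊢
      omega
    have hpn : p (m + 1) ∈ affineSpan ℝ (p '' Set.Ico 1 (1 + (m + 1))) :=
      mem_affineSpan ℝ ⟨m + 1, Set.mem_Ico.2 ⟨by omega, by omega⟩, rfl⟩
    have := AffineSubspace.smul_vsub_vadd_mem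
      (affineSpan ℝ (p '' Set.Ico 1 (1 + (m + 1)))) t hQ1mem hpn hpn
    simpa [Q, vsub_eq_sub, vadd_eq_add] using this
  have hQeq : Q = s.circumcenter := s.eq_circumcenter_of_dist_eq hQmem hQdist
  -- Qn equals the circumcenter too
  have hQndist : ∀ i : Fin (m + 1), dist (s.points i) Qn = Rn := by
    intro i
    have := hQnR (i : ℕ) i.isLt
    rw [dist_comm]
    exact this
  have hQnmem : Qn ∈ affineSpan ℝ (Set.range s.points) := by rw [hrange]; exact hQnspan
  have hQneq : Qn = s.circumcenter := s.eq_circumcenter_of_dist_eq hQnmem hQndist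
  rw [hQneq, ← hQeq, hQdef]
  abel
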